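/- For each integer x and each integer t ≥ 1, the following recurrences hold: a₁(x,t+1) = (1/√2)·(a₂(x+1,t) + a₁(x+1,t)) and a₂(x,t+1) = (1/√2)·(a₂(x−1,t) − a₁(x−1,t)). -/

import Mathlib

open scoped BigOperators

/-- The final x-coordinate of a checker path from `(0,0)` encoded by its sequence of moves
(`true` = move `(1,1)`, `false` = move `(-1,1)`). -/
def moveEndpoint {n : ℕ} (d : Fin n → Bool) : ℤ :=
  ∑ k, (if d k then (1 : ℤ) else -1)

/-- The number of turns of a checker path encoded by its sequence of moves. -/
def nturns {n : ℕ} (d : Fin n → Bool) : ℕ :=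
  ((List.ofFn d).zip (List.ofFn d).tail).countP fun p => p.1 != p.2

/-- Checker paths from `(0,0)` to `(x,t)` whose first step is to `(1,1)`,
encoded by their sequences of moves. -/
def cpaths (x t : ℤ) : Finset (Fin t.toNat → Bool) :=
  Finset.univ.filter fun d => moveEndpoint d = x ∧ (List.ofFn d).headI = true

/-- Feynman checkers amplitude `a(x,t) = 2^((1-t)/2) * i * ∑ₛ (-i)^turns(s)`. -/
noncomputable def a (x t : ℤ) : ℂ :=
  (Real.sqrt 2 : ℂ) ^ (1 - t) * Complex.I * ∑ d ∈ cpaths x t, (-Complex.I) ^ nturns d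

/-! ### Auxiliary material -/

def turnsL (l : List Bool) : ℕ := (l.zip l.tail).countP fun p => p.1 != p.2

lemma nturns_eq_turnsL {n : ℕ} (d : Fin n → Bool) : nturns d = turnsL (List.ofFn d) := rfl

lemma turnsL_concat : ∀ (a : Bool) (l : List Bool) (b : Bool),
    turnsL ((a :: l) ++ [b]) =
      turnsL (a :: l) + (if (a :: l).getLast? = some b then 0 else 1) := by
  intro a l
  induction l generalizing a with
  | nil => intro b; cases a <;> cases b <;> simp [turnsL, List.countP_cons]
  | cons c l ih =>
    intro b
    have h1 : turnsL ((a :: c :: l) ++ [b])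
        = (if a != c then 1 else 0) + turnsL ((c :: l) ++ [b]) := by
      simp [turnsL, List.countP_cons]; ring
    have h2 : turnsL (a :: c :: l) = (if a != c then 1 else 0) + turnsL (c :: l) := by
      simp [turnsL, List.countP_cons]; ring
    rw [h1, h2, ih c b, List.getLast?_cons_cons]
    ring

lemma turnsL_parity : ∀ (a : Bool) (l : List Bool),
    turnsL (a :: l) % 2 = if (a :: l).getLast? = some a then 0 else 1 := by
  intro a l
  induction l generalizing a with
  | nil => simp [turnsL]
  | cons c l ih =>
    have h2 : turnsL (a :: c :: l) = (if a != c then 1 else 0) + turnsL (c :: l) := by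
      simp [turnsL, List.countP_cons]; ring
    rw [h2, List.getLast?_cons_cons, Nat.add_mod, ih c]
    obtain ⟨g, hg⟩ := Option.isSome_iff_exists.mp
      (List.getLast?_isSome.mpr (List.cons_ne_nil c l))
    rw [hg]
    cases g <;> cases a <;> cases c <;> simp

lemma ofFn_snoc' {n : ℕ} (e : Fin n → Bool) (b : Bool) :
    List.ofFn (Fin.snoc e b) = List.ofFn e ++ [b] := by
  rw [List.ofFn_succ']
  simp [Fin.snoc_castSucc]

lemma ofFn_cons {n : ℕ} (e : Fin (n + 1) → Bool) :
    List.ofFn e = e 0 :: List.ofFn (fun i : Fin n => e i.succ) := by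
  rw [List.ofFn_succ]

lemma getLast?_ofFn {n : ℕ} (e : Fin (n + 1) → Bool) :
    (List.ofFn e).getLast? = some (e (Fin.last n)) := by
  have h : List.ofFn e = List.ofFn (Fin.init e) ++ [e (Fin.last n)] := by
    rw [← ofFn_snoc', Fin.snoc_init_self]
  rw [h]
  exact List.getLast?_concat

lemma moveEndpoint_snoc {n : ℕ} (e : Fin n → Bool) (b : Bool) :
    moveEndpoint (Fin.snoc e b) = moveEndpoint e + (if b then 1 else -1) := by
  unfold moveEndpoint
  rw [Fin.sum_univ_castSucc]
  simp [Fin.snoc_castSucc, Fin.snoc_last]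

lemma headI_ofFn_snoc {n : ℕ} (e : Fin (n + 1) → Bool) (b : Bool) :
    (List.ofFn (Fin.snoc e b)).headI = (List.ofFn e).headI := by
  rw [ofFn_snoc', ofFn_cons, List.cons_append]
  rfl

lemma nturns_snoc {n : ℕ} (e : Fin (n + 1) → Bool) (b : Bool) :
    nturns (Fin.snoc e b) = nturns e + (if e (Fin.last n) = b then 0 else 1) := by
  rw [nturns_eq_turnsL, nturns_eq_turnsL, ofFn_snoc', ofFn_cons, ← ofFn_cons,
    ofFn_cons e, List.cons_append, ← List.cons_append]
  rw [turnsL_concat (e 0) (List.ofFn fun i : Fin n => e i.succ) b, ← ofFn_cons e,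
    getLast?_ofFn]
  simp

lemma nturns_parity {n : ℕ} (e : Fin (n + 1) → Bool) (hh : (List.ofFn e).headI = true) :
    nturns e % 2 = if e (Fin.last n) = true then 0 else 1 := by
  have h0 : (List.ofFn e).headI = e 0 := by rw [ofFn_cons]; rfl
  rw [h0] at hh
  rw [nturns_eq_turnsL, ofFn_cons, turnsL_parity, ← ofFn_cons, getLast?_ofFn, hh]
  simp

lemma neg_one_pow_im (m : ℕ) : ((-1 : ℂ) ^ m).im = 0 := by
  rcases Nat.even_or_odd m with h | h
  · rw [h.neg_one_pow]; simp
  · rw [h.neg_one_pow]; simp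

lemma neg_I_pow_even_im (m : ℕ) : ((-Complex.I) ^ (2 * m)).im = 0 := by
  rw [pow_mul]
  have h2 : (-Complex.I) ^ 2 = -1 := by simp [sq]
  rw [h2]; exact neg_one_pow_im m

lemma neg_I_pow_odd_re (m : ℕ) : ((-Complex.I) ^ (2 * m + 1)).re = 0 := by
  rw [pow_succ, pow_mul]
  have h2 : (-Complex.I) ^ 2 = -1 := by simp [sq]
  rw [h2, Complex.mul_re]
  simp [neg_one_pow_im]

/-- Partial amplitude sums: paths of length `n+1` ending at `x` starting with a right move,
whose last move is `c`. -/
noncomputable def TF (x : ℤ) (n : ℕ) (c : Bool) : ℂ :=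
  ∑ e ∈ Finset.univ.filter (fun e : Fin (n + 1) → Bool =>
      (moveEndpoint e = x ∧ (List.ofFn e).headI = true) ∧ e (Fin.last n) = c),
    (-Complex.I) ^ (nturns e)

def snocE (n : ℕ) : ((Fin n → Bool) × Bool) ≃ (Fin (n + 1) → Bool) where
  toFun p := Fin.snoc p.1 p.2
  invFun d := (Fin.init d, d (Fin.last n))
  left_inv p := by simp [Fin.init_snoc, Fin.snoc_last]
  right_inv d := by simp [Fin.snoc_init_self]

lemma TF_im (x : ℤ) (n : ℕ) : (TF x n true).im = 0 := by
  rw [TF, Complex.im_sum]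
  apply Finset.sum_eq_zero
  intro e he
  rw [Finset.mem_filter] at he
  obtain ⟨-, ⟨-, hh⟩, hl⟩ := he
  have hp := nturns_parity e hh
  rw [hl] at hp; simp at hp
  obtain ⟨m, hm⟩ := (Nat.even_iff.mpr hp)
  rw [show nturns e = 2 * m by omega]
  exact neg_I_pow_even_im m

lemma TF_re (x : ℤ) (n : ℕ) : (TF x n false).re = 0 := by
  rw [TF, Complex.re_sum]
  apply Finset.sum_eq_zero
  intro e he
  rw [Finset.mem_filter] at he
  obtain ⟨-, ⟨-, hh⟩, hl⟩ := he
  have hp := nturns_parity e hh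
  rw [hl] at hp; simp at hp
  obtain ⟨m, hm⟩ := (Nat.odd_iff.mpr hp)
  rw [hm]
  exact neg_I_pow_odd_re m

lemma bridge1 (x : ℤ) (n : ℕ) :
    ∑ d ∈ cpaths x ((n : ℤ) + 1), (-Complex.I) ^ (nturns d) = TF x n true + TF x n false := by
  rw [TF, TF]
  show (∑ d ∈ Finset.univ.filter
      (fun d : Fin (n + 1) → Bool => moveEndpoint d = x ∧ (List.ofFn d).headI = true),
      (-Complex.I) ^ (nturns d)) = _
  rw [← Finset.sum_filter_add_sum_filter_not
    (Finset.univ.filter fun d : Fin (n+1) → Bool =>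
      moveEndpoint d = x ∧ (List.ofFn d).headI = true)
    (fun d => d (Fin.last n) = true)]
  rw [Finset.filter_filter, Finset.filter_filter]
  congr 1
  apply Finset.sum_congr _ (fun _ _ => rfl)
  apply Finset.filter_congr
  intro d _
  simp

lemma bridge2 (x : ℤ) (n : ℕ) (c : Bool) :
    TF x (n + 1) c =
      TF (x - (if c then 1 else -1)) n c
        + (-Complex.I) * TF (x - (if c then 1 else -1)) n (!c) := by
  rw [TF, Finset.sum_filter]
  rw [← Fintype.sum_equiv (snocE (n + 1))
      (fun p : (Fin (n+1) → Bool) × Bool =>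
        if ((moveEndpoint (Fin.snoc p.1 p.2) = x
              ∧ (List.ofFn (Fin.snoc p.1 p.2)).headI = true)
            ∧ (Fin.snoc p.1 p.2 : Fin (n+2) → Bool) (Fin.last (n+1)) = c)
          then (-Complex.I) ^ (nturns (Fin.snoc p.1 p.2)) else 0)
      _ (fun p => rfl)]
  rw [Fintype.sum_prod_type]
  have hrhs : TF (x - (if c then 1 else -1)) n c
        + (-Complex.I) * TF (x - (if c then 1 else -1)) n (!c)
      = ∑ e : Fin (n+1) → Bool,
          ((if (moveEndpoint e = x - (if c then 1 else -1)
                ∧ (List.ofFn e).headI = true) ∧ e (Fin.last n) = c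
            then (-Complex.I) ^ (nturns e) else 0)
          + (if (moveEndpoint e = x - (if c then 1 else -1)
                ∧ (List.ofFn e).headI = true) ∧ e (Fin.last n) = !c
            then (-Complex.I) * (-Complex.I) ^ (nturns e) else 0)) := by
    rw [Finset.sum_add_distrib, TF, TF, Finset.sum_filter, Finset.sum_filter,
      Finset.mul_sum]
    congr 1
    apply Finset.sum_congr rfl
    intro e _
    split_ifs <;> simp
  rw [hrhs]
  apply Finset.sum_congr rfl
  intro e _
  rw [Fintype.sum_bool]
  have hsl : ∀ b : Bool, (Fin.snoc e b : Fin (n+2) → Bool) (Fin.last (n+1)) = b := by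
    intro b; simp
  rw [hsl, hsl, moveEndpoint_snoc, moveEndpoint_snoc, headI_ofFn_snoc, headI_ofFn_snoc,
    nturns_snoc, nturns_snoc]
  have harith : ∀ v : ℤ, (moveEndpoint e + v = x) ↔ (moveEndpoint e = x - v) := by
    intro v; omega
  cases c
  · -- c = false
    rcases hl : e (Fin.last n)
    · -- last move of e is false
      simp only [hl, if_true, if_false, harith]
      by_cases h : moveEndpoint e = x - -1 ∧ (List.ofFn e).headI = true
      · simp [h]
        try (split_ifs <;> ring)
      · simp [h]
        try (split_ifs <;> ring)
    · simp only [hl, if_true, if_false, harith]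
      by_cases h : moveEndpoint e = x - -1 ∧ (List.ofFn e).headI = true
      · simp [h, pow_succ]; ring
      · simp [h]
        try (split_ifs <;> ring)
  · rcases hl : e (Fin.last n)
    · simp only [hl, if_true, if_false, harith]
      by_cases h : moveEndpoint e = x - 1 ∧ (List.ofFn e).headI = true
      · simp [h, pow_succ]; ring
      · simp [h]
        try (split_ifs <;> ring)
    · simp only [hl, if_true, if_false, harith]
      by_cases h : moveEndpoint e = x - 1 ∧ (List.ofFn e).headI = true
      · simp [h]
        try (split_ifs <;> ring)
      · simp [h]
        try (split_ifs <;> ring)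

lemma bridge2T (x : ℤ) (n : ℕ) :
    TF x (n + 1) true = TF (x - 1) n true + (-Complex.I) * TF (x - 1) n false := by
  simpa using bridge2 x n true

lemma bridge2F (x : ℤ) (n : ℕ) :
    TF x (n + 1) false = TF (x + 1) n false + (-Complex.I) * TF (x + 1) n true := by
  simpa [sub_neg_eq_add] using bridge2 x n false

lemma a_eq (x : ℤ) (n : ℕ) :
    a x ((n : ℤ) + 1) =
      (Real.sqrt 2 : ℂ) ^ (1 - ((n : ℤ) + 1)) * Complex.I * (TF x n true + TF x n false) := by
  rw [a, bridge1]

/-- Dirac equation for the basic model. -/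
theorem dirac_equation (x t : ℤ) (ht : 1 ≤ t) :
    (a x (t + 1)).re = (1 / Real.sqrt 2) * ((a (x + 1) t).im + (a (x + 1) t).re) ∧
    (a x (t + 1)).im = (1 / Real.sqrt 2) * ((a (x - 1) t).im - (a (x - 1) t).re) := by
  obtain ⟨n, rfl⟩ : ∃ n : ℕ, t = (n : ℤ) + 1 := ⟨(t - 1).toNat, by omega⟩
  have hs0 : Real.sqrt 2 ≠ 0 := by positivity
  have hc : ((n + 1 : ℕ) : ℤ) = (n : ℤ) + 1 := by push_cast; ring
  have hA := a_eq x (n + 1)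
  rw [hc, bridge2T, bridge2F] at hA
  have hB := a_eq (x + 1) n
  have hC := a_eq (x - 1) n
  have hr1 : ((Real.sqrt 2 : ℝ) : ℂ) ^ (1 - ((n : ℤ) + 1 + 1))
      = ((Real.sqrt 2 ^ (1 - ((n : ℤ) + 1 + 1)) : ℝ) : ℂ) := (Complex.ofReal_zpow _ _).symm
  have hr2 : ((Real.sqrt 2 : ℝ) : ℂ) ^ (1 - ((n : ℤ) + 1))
      = ((Real.sqrt 2 ^ (1 - ((n : ℤ) + 1)) : ℝ) : ℂ) := (Complex.ofReal_zpow _ _).symm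
  rw [hr1] at hA
  rw [hr2] at hB hC
  have hrr : Real.sqrt 2 ^ (1 - ((n : ℤ) + 1))
      = Real.sqrt 2 * Real.sqrt 2 ^ (1 - ((n : ℤ) + 1 + 1)) := by
    rw [show (1 - ((n : ℤ) + 1)) = 1 + (1 - ((n : ℤ) + 1 + 1)) by ring, zpow_add₀ hs0,
      zpow_one]
  have hTp := TF_im (x + 1) n
  have hFp := TF_re (x + 1) n
  have hTm := TF_im (x - 1) n
  have hFm := TF_re (x - 1) n
  constructor
  · rw [hA, hB]
    simp only [Complex.add_re, Complex.add_im, Complex.mul_re, Complex.mul_im,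
      Complex.I_re, Complex.I_im, Complex.ofReal_re, Complex.ofReal_im,
      Complex.neg_re, Complex.neg_im, hTp, hFp, hTm, hFm]
    rw [hrr]
    field_simp
    ring
  · rw [hA, hC]
    simp only [Complex.add_re, Complex.add_im, Complex.mul_re, Complex.mul_im,
      Complex.I_re, Complex.I_im, Complex.ofReal_re, Complex.ofReal_im,
      Complex.neg_re, Complex.neg_im, hTp, hFp, hTm, hFm]
    rw [hrr]
    field_simp
    ring
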